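/- In a purely electromagnetic distribution, an M-projectively flat spacetime satisfying the Einstein field equations without a cosmological constant is flat (hence admits no curvature symmetry of general relativity): if (V,g,R) is M-projectively flat (W = 0) and there is a symmetric bilinear form T with Ric − (Scal/2)·g = κ·T, κ ≠ 0, and T = 0, then R(x,y,z,w) = 0 for all x,y,z,w in V. -/

import Mathlib

/-- The Ricci tensor of a quadrilinear curvature tensor `R` on a real vector
space, computed with respect to a `g`-orthonormal basis `e` with signs `ε`:
`Ric(x,y) = Σ_a ε_a R(e_a, x, y, e_a)`. -/
noncomputable def ricci {V : Type*} [AddCommGroup V] [Module ℝ V]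
    (R : V →ₗ[ℝ] V →ₗ[ℝ] V →ₗ[ℝ] V →ₗ[ℝ] ℝ) (e : Fin 4 → V) (ε : Fin 4 → ℝ)
    (x y : V) : ℝ :=
  ∑ a, ε a * R (e a) x y (e a)

/-- The scalar curvature `Scal = Σ_a ε_a Ric(e_a, e_a)`. -/
noncomputable def scalarCurv {V : Type*} [AddCommGroup V] [Module ℝ V]
    (R : V →ₗ[ℝ] V →ₗ[ℝ] V →ₗ[ℝ] V →ₗ[ℝ] ℝ) (e : Fin 4 → V) (ε : Fin 4 → ℝ) : ℝ :=
  ∑ a, ε a * ricci R e ε (e a) (e a)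

/-- The M-projective curvature tensor
`W(x,y,z,w) = R(x,y,z,w) + (1/6)[g(x,z)Ric(y,w) − g(x,w)Ric(y,z)
  + Ric(x,z)g(y,w) − Ric(x,w)g(y,z)]`. -/
noncomputable def mProj {V : Type*} [AddCommGroup V] [Module ℝ V]
    (g : V →ₗ[ℝ] V →ₗ[ℝ] ℝ)
    (R : V →ₗ[ℝ] V →ₗ[ℝ] V →ₗ[ℝ] V →ₗ[ℝ] ℝ) (e : Fin 4 → V) (ε : Fin 4 → ℝ)
    (x y z w : V) : ℝ :=
  R x y z w + (1 / 6) * (g x z * ricci R e ε y w - g x w * ricci R e ε y z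
    + ricci R e ε x z * g y w - ricci R e ε x w * g y z)

/-- In a purely electromagnetic distribution, an M-projectively
flat spacetime satisfying the Einstein field equations without a cosmological
constant is flat: if `W = 0`, `Ric − (Scal/2)·g = κ·T` with `κ ≠ 0` and `T = 0`,
then `R = 0`. -/
theorem mProjFlat_electromagnetic_isFlat
    {V : Type*} [AddCommGroup V] [Module ℝ V] [FiniteDimensional ℝ V]
    (hdim : Module.finrank ℝ V = 4)
    (g : V →ₗ[ℝ] V →ₗ[ℝ] ℝ)
    (hg_symm : ∀ x y, g x y = g y x)
    (hg_nondeg : ∀ x, (∀ y, g x y = 0) → x = 0)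
    (R : V →ₗ[ℝ] V →ₗ[ℝ] V →ₗ[ℝ] V →ₗ[ℝ] ℝ)
    (hR_skew₁ : ∀ x y z w, R x y z w = - R y x z w)
    (hR_skew₂ : ∀ x y z w, R x y z w = - R x y w z)
    (hR_pair : ∀ x y z w, R x y z w = R z w x y)
    (hR_bianchi : ∀ x y z w, R x y z w + R y z x w + R z x y w = 0)
    (e : Module.Basis (Fin 4) ℝ V) (ε : Fin 4 → ℝ)
    (hε : ∀ a, ε a = 1 ∨ ε a = -1)
    (horth : ∀ a b, g (e a) (e b) = if a = b then ε a else 0)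
    (hflat : ∀ x y z w, mProj g R ⇑e ε x y z w = 0)
    (T : V →ₗ[ℝ] V →ₗ[ℝ] ℝ) (κ : ℝ) (hκ : κ ≠ 0)
    (hEFE : ∀ x y, ricci R ⇑e ε x y - (scalarCurv R ⇑e ε / 2) * g x y = κ * T x y)
    (hT : ∀ x y, T x y = 0) :
    ∀ x y z w, R x y z w = 0 := by
  have hRic : ∀ x y, ricci R ⇑e ε x y = (scalarCurv R ⇑e ε / 2) * g x y := by
    intro x y
    have h := hEFE x y
    rw [hT] at h
    linarith
  have hScal : scalarCurv R ⇑e ε = 0 := by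
    have h : scalarCurv R ⇑e ε = ∑ a : Fin 4, scalarCurv R ⇑e ε / 2 := by
      nth_rewrite 1 [scalarCurv]
      refine Finset.sum_congr rfl (fun a _ => ?_)
      rw [hRic, horth]
      rcases hε a with h1 | h1 <;> simp [h1]
    simp [Finset.sum_const] at h
    linarith
  have hRic0 : ∀ x y, ricci R ⇑e ε x y = 0 := by
    intro x y; rw [hRic, hScal]; ring
  intro x y z w
  have h := hflat x y z w
  unfold mProj at h
  rw [hRic0, hRic0, hRic0, hRic0] at h
  linarith
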